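/- Let $f \in \mathbb{C}[[x,y]]$ with $\mathrm{ord}(f) = m \geq 1$ and $g \in \mathbb{C}[[x,y]]$. Then there exist $a, b \in \mathbb{C}[[x,y]]$ such that $f + \varepsilon g \in \langle x + \varepsilon a, y + \varepsilon b \rangle^m$ in $\mathbb{C}[[x,y]][\varepsilon]/(\varepsilon^2)$ if and only if $g \in \langle \partial f/\partial x, \partial f/\partial y \rangle + \langle x, y \rangle^m$. -/

import Mathlib

set_option synthInstance.maxHeartbeats 1000000
set_option maxHeartbeats 2000000

open MvPowerSeries TrivSqZeroExt DualNumber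

noncomputable section

abbrev R2 := MvPowerSeries (Fin 2) ℂ

def Mxy : Ideal R2 := Ideal.span {MvPowerSeries.X 0, MvPowerSeries.X 1}

/-- Formal partial derivative of a power series in two variables. -/
def pd (i : Fin 2) (f : R2) : R2 :=
  fun d => (d i + 1 : ℂ) * MvPowerSeries.coeff (R := ℂ) (d + Finsupp.single i 1) f

/-- The element `x + ε a` of the dual numbers over `ℂ[[x,y]]`. -/
def Xa (a : R2) : DualNumber R2 := inl (MvPowerSeries.X 0) + eps * inl a

/-- The element `y + ε b` of the dual numbers over `ℂ[[x,y]]`. -/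
def Yb (b : R2) : DualNumber R2 := inl (MvPowerSeries.X 1) + eps * inl b

/-- The `n`-th term of the expansion of `f (x + ε a, y + ε b)`. -/
def termD (a b f : R2) (n : Fin 2 →₀ ℕ) : DualNumber R2 :=
  inl (MvPowerSeries.C (σ := Fin 2) (R := ℂ) (MvPowerSeries.coeff (R := ℂ) n f)) *
    (Xa a ^ (n 0) * Yb b ^ (n 1))

/-- Substitution `f (x + ε a, y + ε b)`, defined coefficientwise: each coefficient of
each component only receives contributions from finitely many terms of the expansion. -/
def substDual (a b f : R2) : DualNumber R2 :=
  TrivSqZeroExt.inl (R := R2) (M := R2) ((fun d => MvPowerSeries.coeff (R := ℂ) d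
        (fst (∑ n ∈ Finset.Iic (d + Finsupp.single 0 1 + Finsupp.single 1 1),
          termD a b f n)) : R2)) +
  TrivSqZeroExt.inr (R := R2) (M := R2) ((fun d => MvPowerSeries.coeff (R := ℂ) d
        (snd (∑ n ∈ Finset.Iic (d + Finsupp.single 0 1 + Finsupp.single 1 1),
          termD a b f n)) : R2))

/-! ### Auxiliary lemmas -/

lemma coeff_pd (i : Fin 2) (f : R2) (d : Fin 2 →₀ ℕ) :
    MvPowerSeries.coeff (R := ℂ) d (pd i f) =
      (d i + 1 : ℂ) * MvPowerSeries.coeff (R := ℂ) (d + Finsupp.single i 1) f := rfl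

lemma pd_zero (i : Fin 2) : pd i 0 = 0 := by
  apply MvPowerSeries.ext; intro d; simp [coeff_pd]

lemma pd_add (i : Fin 2) (f g : R2) : pd i (f + g) = pd i f + pd i g := by
  apply MvPowerSeries.ext; intro d; simp [coeff_pd]; ring

lemma pd_sum {ι : Type*} (i : Fin 2) (s : Finset ι) (f : ι → R2) :
    pd i (∑ x ∈ s, f x) = ∑ x ∈ s, pd i (f x) := by
  classical
  induction s using Finset.induction with
  | empty => simp [pd_zero]
  | insert _ _ h ih => simp [Finset.sum_insert h, pd_add, ih]

lemma pd_mul_X_same (i : Fin 2) (p : R2) : pd i (p * X i) = pd i p * X i + p := by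
  apply MvPowerSeries.ext; intro d
  rw [map_add, coeff_pd]
  rw [X_def, MvPowerSeries.coeff_mul_monomial, MvPowerSeries.coeff_mul_monomial]
  have h1 : Finsupp.single i 1 ≤ d + Finsupp.single i 1 := le_add_self
  rw [if_pos h1, add_tsub_cancel_right, mul_one]
  by_cases h : Finsupp.single i 1 ≤ d
  · rw [if_pos h, mul_one, coeff_pd, tsub_add_cancel_of_le h]
    have hd : 1 ≤ d i := by simpa using (Finsupp.single_le_iff).mp h
    have : (((d - Finsupp.single i 1 : Fin 2 →₀ ℕ)) i : ℂ) = (d i : ℂ) - 1 := by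
      rw [Finsupp.tsub_apply, Finsupp.single_apply, if_pos rfl]
      push_cast [hd]; ring
    rw [this]; ring
  · rw [if_neg h]
    have hd : d i = 0 := by
      by_contra hne
      exact h (Finsupp.single_le_iff.mpr (Nat.one_le_iff_ne_zero.mpr hne))
    rw [hd]; push_cast; ring

lemma pd_mul_X_ne (i s : Fin 2) (h : s ≠ i) (p : R2) : pd i (p * X s) = pd i p * X s := by
  apply MvPowerSeries.ext; intro d
  rw [coeff_pd, X_def, MvPowerSeries.coeff_mul_monomial, MvPowerSeries.coeff_mul_monomial]
  have hiff : Finsupp.single s 1 ≤ d + Finsupp.single i 1 ↔ Finsupp.single s 1 ≤ d := by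
    rw [Finsupp.single_le_iff, Finsupp.single_le_iff, Finsupp.add_apply,
      Finsupp.single_apply, if_neg (by simpa using h.symm), add_zero]
  by_cases hle : Finsupp.single s 1 ≤ d
  · rw [if_pos (hiff.mpr hle), if_pos hle, mul_one, mul_one, coeff_pd,
      tsub_add_eq_add_tsub hle]
    have : (((d - Finsupp.single s 1 : Fin 2 →₀ ℕ)) i : ℂ) = (d i : ℂ) := by
      rw [Finsupp.tsub_apply, Finsupp.single_apply, if_neg (by simpa using h)]
      simp
    rw [this]
  · rw [if_neg (fun hc => hle (hiff.mp hc)), if_neg hle, mul_zero]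

lemma pd_mul_X_pow_ne (i s : Fin 2) (h : s ≠ i) (p : R2) (k : ℕ) :
    pd i (p * X s ^ k) = pd i p * X s ^ k := by
  induction k with
  | zero => simp
  | succ k ih =>
    rw [pow_succ, ← mul_assoc, pd_mul_X_ne i s h, ih, mul_assoc]

lemma pd_mul_X_pow_same (i : Fin 2) (p : R2) (k : ℕ) :
    pd i (p * X i ^ k) = pd i p * X i ^ k + (k : R2) * (p * X i ^ (k - 1)) := by
  induction k with
  | zero => simp
  | succ k ih =>
    rw [pow_succ, ← mul_assoc, pd_mul_X_same, ih]
    match k with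
    | 0 => push_cast; ring_nf
    | k + 1 =>
      rw [Nat.add_sub_cancel, Nat.add_sub_cancel]
      push_cast
      ring

lemma pd0_mul_mon (p : R2) (i j : ℕ) :
    pd 0 (p * (X 0 ^ i * X 1 ^ j)) =
      pd 0 p * (X 0 ^ i * X 1 ^ j) + (i : R2) * (p * (X 0 ^ (i - 1) * X 1 ^ j)) := by
  rw [← mul_assoc, pd_mul_X_pow_ne 0 1 (by decide), pd_mul_X_pow_same]
  ring

lemma pd1_mul_mon (p : R2) (i j : ℕ) :
    pd 1 (p * (X 0 ^ i * X 1 ^ j)) =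
      pd 1 p * (X 0 ^ i * X 1 ^ j) + (j : R2) * (p * (X 0 ^ i * X 1 ^ (j - 1))) := by
  have h : p * (X 0 ^ i * X 1 ^ j) = (p * X 1 ^ j) * X 0 ^ i := by ring
  rw [h, pd_mul_X_pow_ne 1 0 (by decide), pd_mul_X_pow_same]
  ring

lemma span_pair_pow {A : Type*} [CommRing A] (u v : A) (m : ℕ) :
    Ideal.span {u, v} ^ m =
      Ideal.span (Set.range fun i : Fin (m + 1) => u ^ (i : ℕ) * v ^ (m - (i : ℕ))) := by
  induction m with
  | zero =>
    rw [pow_zero, Ideal.one_eq_top, eq_comm, Ideal.eq_top_iff_one]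
    apply Ideal.subset_span
    exact ⟨0, by simp⟩
  | succ m ih =>
    rw [pow_succ, ih, Ideal.span_mul_span']
    apply le_antisymm
    · rw [Ideal.span_le]
      rintro x ⟨y, ⟨i, rfl⟩, z, hz, rfl⟩
      rcases hz with rfl | rfl
      · apply Ideal.subset_span
        refine ⟨⟨(i : ℕ) + 1, by omega⟩, ?_⟩
        have : m + 1 - ((i : ℕ) + 1) = m - (i : ℕ) := by omega
        simp only [this]
        ring
      · apply Ideal.subset_span
        refine ⟨⟨(i : ℕ), by omega⟩, ?_⟩
        have hi : (i : ℕ) ≤ m := by omega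
        have : m + 1 - (i : ℕ) = (m - (i : ℕ)) + 1 := by omega
        simp only [this, pow_succ]
        ring
    · rw [Ideal.span_le]
      rintro x ⟨j, rfl⟩
      apply Ideal.subset_span
      rcases j with ⟨jv, hjv⟩
      match jv with
      | 0 =>
        refine ⟨u ^ 0 * v ^ (m - 0), ⟨0, rfl⟩, v, by simp, ?_⟩
        have : m + 1 - 0 = (m - 0) + 1 := by omega
        simp only [Fin.val_mk, this, pow_succ]
        ring
      | k + 1 =>
        refine ⟨u ^ k * v ^ (m - k), ⟨⟨k, by omega⟩, rfl⟩, u, by simp, ?_⟩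
        have : m + 1 - (k + 1) = m - k := by omega
        simp only [Fin.val_mk, this, pow_succ]
        ring

@[simp] lemma fst_mk' (p q : R2) : fst (inl p + eps * inl q : DualNumber R2) = p := by
  simp

@[simp] lemma snd_mk' (p q : R2) : snd (inl p + eps * inl q : DualNumber R2) = q := by
  simp [DualNumber.snd_mul]

@[simp] lemma fst_Xa (a : R2) : fst (Xa a) = MvPowerSeries.X 0 := fst_mk' _ _
@[simp] lemma snd_Xa (a : R2) : snd (Xa a) = a := snd_mk' _ _
@[simp] lemma fst_Yb (b : R2) : fst (Yb b) = MvPowerSeries.X 1 := fst_mk' _ _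
@[simp] lemma snd_Yb (b : R2) : snd (Yb b) = b := snd_mk' _ _

/-- The monomial `x^i y^(m-i)`. -/
def mon (m i : ℕ) : R2 := X 0 ^ i * X 1 ^ (m - i)

/-- The second component of `(x+εa)^i (y+εb)^(m-i)`. -/
def sF (a b : R2) (m i : ℕ) : R2 :=
  (i : R2) * (a * (X 0 ^ (i - 1) * X 1 ^ (m - i))) +
    ((m - i : ℕ) : R2) * (b * (X 0 ^ i * X 1 ^ (m - i - 1)))

lemma fst_F (a b : R2) (m i : ℕ) :
    fst (Xa a ^ i * Yb b ^ (m - i)) = mon m i := by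
  simp [mon]

lemma snd_F (a b : R2) (m i : ℕ) :
    snd (Xa a ^ i * Yb b ^ (m - i)) = sF a b m i := by
  rw [DualNumber.snd_mul, sF]
  simp only [fst_pow, fst_Xa, fst_Yb, snd_pow, snd_Xa, snd_Yb, smul_eq_mul, nsmul_eq_mul]
  push_cast
  ring_nf
  rw [Nat.pred_eq_sub_one, Nat.pred_eq_sub_one]

/-- Key algebraic identity relating the second component of an element of
`(x+εa, y+εb)^m` to the partial derivatives. -/
lemma key_sum (m : ℕ) (p q : Fin (m + 1) → R2) (a b : R2) :
    ∑ i : Fin (m + 1), (q i * mon m (i : ℕ) + p i * sF a b m (i : ℕ)) =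
      a * pd 0 (∑ i : Fin (m + 1), p i * mon m (i : ℕ)) +
        b * pd 1 (∑ i : Fin (m + 1), p i * mon m (i : ℕ)) +
        ∑ i : Fin (m + 1),
          ((q i - a * pd 0 (p i) - b * pd 1 (p i)) * mon m (i : ℕ)) := by
  rw [pd_sum, pd_sum]
  simp only [mon, pd0_mul_mon, pd1_mul_mon]
  rw [Finset.mul_sum, Finset.mul_sum, ← Finset.sum_add_distrib, ← Finset.sum_add_distrib]
  apply Finset.sum_congr rfl
  intro i _
  simp only [sF]
  ring

lemma mem_Mxy_pow_iff (m : ℕ) (h : R2) :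
    h ∈ Mxy ^ m ↔ ∃ c : Fin (m + 1) → R2, ∑ i : Fin (m + 1), c i * mon m (i : ℕ) = h := by
  rw [Mxy, span_pair_pow, Ideal.mem_span_range_iff_exists_fun]
  simp only [mon]

lemma mem_J_pow_iff (m : ℕ) (a b : R2) (z : DualNumber R2) :
    z ∈ Ideal.span {Xa a, Yb b} ^ m ↔
      ∃ c : Fin (m + 1) → DualNumber R2,
        ∑ i : Fin (m + 1), c i * (Xa a ^ (i : ℕ) * Yb b ^ (m - (i : ℕ))) = z := by
  rw [span_pair_pow, Ideal.mem_span_range_iff_exists_fun]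

/-- `f + ε g` is equimultiple along some section iff
`g ∈ ⟨∂f/∂x, ∂f/∂y⟩ + ⟨x,y⟩^m`. -/
theorem equimultiple_some_section_iff (m : ℕ) (hm : 1 ≤ m) (f g : R2)
    (hf : f ∈ Mxy ^ m) (hf' : f ∉ Mxy ^ (m + 1)) :
    (∃ a b : R2,
        (TrivSqZeroExt.inl f + eps * TrivSqZeroExt.inl g : DualNumber R2)
          ∈ Ideal.span {Xa a, Yb b} ^ m)
      ↔ g ∈ Ideal.span {pd 0 f, pd 1 f} + Mxy ^ m := by
  constructor
  · rintro ⟨a, b, hz⟩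
    rw [mem_J_pow_iff] at hz
    obtain ⟨c, hc⟩ := hz
    set p : Fin (m + 1) → R2 := fun i => fst (c i) with hp
    set q : Fin (m + 1) → R2 := fun i => snd (c i) with hq
    have hf2 : ∑ i : Fin (m + 1), p i * mon m (i : ℕ) = f := by
      have h1 := congrArg fst hc
      rw [fst_sum, fst_mk'] at h1
      rw [← h1]
      apply Finset.sum_congr rfl
      intro i _
      rw [fst_mul, fst_F]
    have hg2 : ∑ i : Fin (m + 1), (q i * mon m (i : ℕ) + p i * sF a b m (i : ℕ)) = g := by
      have h2 := congrArg snd hc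
      rw [snd_sum, snd_mk'] at h2
      rw [← h2]
      apply Finset.sum_congr rfl
      intro i _
      rw [DualNumber.snd_mul, fst_F, snd_F]
      ring
    rw [Ideal.add_eq_sup, Submodule.mem_sup]
    refine ⟨a * pd 0 f + b * pd 1 f, Ideal.mem_span_pair.mpr ⟨a, b, rfl⟩,
      ∑ i : Fin (m + 1), ((q i - a * pd 0 (p i) - b * pd 1 (p i)) * mon m (i : ℕ)),
      (mem_Mxy_pow_iff m _).mpr ⟨_, rfl⟩, ?_⟩
    conv_lhs => rw [← hf2]
    rw [← key_sum]
    exact hg2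
  · intro hg
    rw [Ideal.add_eq_sup, Submodule.mem_sup] at hg
    obtain ⟨s, hs, h, hh, hsum⟩ := hg
    obtain ⟨u, v, rfl⟩ := Ideal.mem_span_pair.mp hs
    obtain ⟨p, hp⟩ := (mem_Mxy_pow_iff m f).mp hf
    obtain ⟨w, hw⟩ := (mem_Mxy_pow_iff m h).mp hh
    refine ⟨u, v, ?_⟩
    rw [mem_J_pow_iff]
    refine ⟨fun i => inl (p i) + eps * inl (w i + u * pd 0 (p i) + v * pd 1 (p i)), ?_⟩
    have hfst : ∀ i : Fin (m + 1),
        fst ((inl (p i) + eps * inl (w i + u * pd 0 (p i) + v * pd 1 (p i)) : DualNumber R2) *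
          (Xa u ^ (i : ℕ) * Yb v ^ (m - (i : ℕ)))) = p i * mon m (i : ℕ) := by
      intro i
      rw [fst_mul, fst_mk', fst_F]
    apply TrivSqZeroExt.ext
    · rw [fst_sum, fst_mk']
      rw [Finset.sum_congr rfl (fun i _ => hfst i)]
      exact hp
    · rw [snd_sum, snd_mk']
      have hsnd : ∀ i : Fin (m + 1),
          snd ((inl (p i) + eps * inl (w i + u * pd 0 (p i) + v * pd 1 (p i)) : DualNumber R2) *
            (Xa u ^ (i : ℕ) * Yb v ^ (m - (i : ℕ)))) =
          (w i + u * pd 0 (p i) + v * pd 1 (p i)) * mon m (i : ℕ) + p i * sF u v m (i : ℕ) := by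
        intro i
        rw [DualNumber.snd_mul, fst_mk', snd_mk', fst_F, snd_F]
        ring
      rw [Finset.sum_congr rfl (fun i _ => hsnd i), key_sum, hp]
      have : ∑ i : Fin (m + 1),
          ((w i + u * pd 0 (p i) + v * pd 1 (p i) - u * pd 0 (p i) - v * pd 1 (p i)) *
            mon m (i : ℕ)) = ∑ i : Fin (m + 1), w i * mon m (i : ℕ) := by
        apply Finset.sum_congr rfl
        intro i _
        ring
      rw [this, hw, ← hsum]
  end
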